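/- For all integers m ≥ 1 and k ≥ 1, Σ_{j=0}^{m} C(m,j) (q−1)^j E_{j,q}^{(0,k+1)} = (1+q)^{k+1} / ∏_{i=0}^{k} (1 + q^{m−i}). -/

import Mathlib

open Finset

/-- The q-number `[x]_q = (1 - q^x)/(1 - q)`, with `q^x = exp (x * log q)` (rpow). -/
noncomputable def qNum (q x : ℝ) : ℝ := (1 - q ^ x) / (1 - q)

/-- `[l]_{-q} = (1 - (-q)^l)/(1 + q)` for a natural number `l`. -/
noncomputable def qNumNeg (q : ℝ) (l : ℕ) : ℝ := (1 - (-q) ^ l) / (1 + q)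

/-- The higher-order q-Euler polynomial
`E_{m,q}^{(h,k)}(x) = ((1+q)^k/(1-q)^m) * Σ_{j=0}^m C(m,j) (-1)^j q^{jx} / Π_{i=0}^{k-1} (1 + q^{h+j-i})`. -/
noncomputable def qE (q : ℝ) (h : ℤ) (k m : ℕ) (x : ℝ) : ℝ :=
  ((1 + q) ^ k / (1 - q) ^ m) *
    ∑ j ∈ Finset.range (m + 1),
      (m.choose j : ℝ) * (-1) ^ j * q ^ ((j : ℝ) * x) /
        ∏ i ∈ Finset.range k, (1 + q ^ ((h : ℝ) + (j : ℝ) - (i : ℝ)))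

lemma alt_sum (n : ℕ) :
    ∑ t ∈ Finset.range (n + 1), (-1 : ℝ) ^ t * (n.choose t : ℝ)
      = if n = 0 then 1 else 0 := by
  have h := Int.alternating_sum_range_choose (n := n)
  have h2 : ((∑ i ∈ range (n + 1), (-1 : ℤ) ^ i * n.choose i : ℤ) : ℝ)
      = ((if n = 0 then 1 else 0 : ℤ) : ℝ) := by rw [h]
  push_cast at h2
  simpa using h2

lemma binom_inv (m : ℕ) (f : ℕ → ℝ) :
    ∑ j ∈ Finset.range (m + 1), ∑ l ∈ Finset.range (j + 1),
      (m.choose j : ℝ) * (j.choose l : ℝ) * (-1) ^ (j + l) * f l = f m := by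
  have swap := Finset.sum_Ico_Ico_comm 0 (m + 1)
    (fun l j => (m.choose j : ℝ) * (j.choose l : ℝ) * (-1) ^ (j + l) * f l)
  simp only [Finset.range_eq_Ico] at *
  rw [← swap]
  have step : ∀ l ∈ Finset.Ico 0 (m + 1),
      (∑ j ∈ Finset.Ico l (m + 1),
        (m.choose j : ℝ) * (j.choose l : ℝ) * (-1) ^ (j + l) * f l)
      = (m.choose l : ℝ) * f l * (if m - l = 0 then 1 else 0) := by
    intro l hl
    rw [Finset.mem_Ico] at hl
    have hlm : l ≤ m := Nat.lt_succ_iff.mp hl.2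
    rw [Finset.sum_Ico_eq_sum_range]
    have hml : m + 1 - l = (m - l) + 1 := by omega
    rw [hml, ← alt_sum (m - l), Finset.mul_sum]
    apply Finset.sum_congr rfl
    intro t ht
    rw [Finset.mem_range] at ht
    have htl : l + t ≤ m := by omega
    have hcc : (m.choose (l + t) : ℝ) * ((l + t).choose l : ℝ)
        = (m.choose l : ℝ) * ((m - l).choose t : ℝ) := by
      have := Nat.choose_mul (n := m) (k := l + t) (s := l) (Nat.le_add_right l t)
      have h2 : m.choose (l + t) * (l + t).choose l
          = m.choose l * (m - l).choose t := by simpa using this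
      exact_mod_cast congrArg (fun x : ℕ => (x : ℝ)) h2
    have hsgn : ((-1 : ℝ)) ^ (l + t + l) = (-1 : ℝ) ^ t := by
      rw [show l + t + l = t + 2 * l by ring, pow_add, pow_mul]
      simp
    rw [hsgn, hcc]
    ring
  rw [Finset.sum_congr rfl step]
  rw [Finset.sum_eq_single m]
  · simp
  · intro l hl hne
    rw [Finset.mem_Ico] at hl
    have : m - l ≠ 0 := by omega
    simp [this]
  · intro h
    exact absurd (by simp [Finset.mem_Ico] : m ∈ Finset.Ico 0 (m + 1)) h

theorem stmt_0 (q : ℝ) (hq : 0 < q) (hq1 : q ≠ 1) (m k : ℕ) (hm : 1 ≤ m) (hk : 1 ≤ k) :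
    ∑ j ∈ Finset.range (m + 1), (m.choose j : ℝ) * (q - 1) ^ j * qE q 0 (k + 1) j 0
      = (1 + q) ^ (k + 1) /
          ∏ i ∈ Finset.range (k + 1), (1 + q ^ ((m : ℝ) - (i : ℝ))) := by
  have hq0 : (1 : ℝ) - q ≠ 0 := by
    intro h; apply hq1; linarith
  set P : ℕ → ℝ := fun l => ∏ i ∈ Finset.range (k + 1), (1 + q ^ ((l : ℝ) - (i : ℝ)))
    with hP
  have key := binom_inv m (fun l => (1 + q) ^ (k + 1) / P l)
  calc ∑ j ∈ Finset.range (m + 1), (m.choose j : ℝ) * (q - 1) ^ j * qE q 0 (k + 1) j 0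
      = ∑ j ∈ Finset.range (m + 1), ∑ l ∈ Finset.range (j + 1),
          (m.choose j : ℝ) * (j.choose l : ℝ) * (-1) ^ (j + l)
            * ((1 + q) ^ (k + 1) / P l) := by
        apply Finset.sum_congr rfl
        intro j _
        rw [qE, Finset.mul_sum, Finset.mul_sum]
        apply Finset.sum_congr rfl
        intro l _
        have hx : q ^ ((l : ℝ) * (0 : ℝ)) = 1 := by
          rw [mul_zero, Real.rpow_zero]
        have hexp : ∀ i : ℕ, ((0 : ℤ) : ℝ) + (l : ℝ) - (i : ℝ) = (l : ℝ) - (i : ℝ) := by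
          intro i; push_cast; ring
        have hPl : (∏ i ∈ Finset.range (k + 1),
            (1 + q ^ (((0 : ℤ) : ℝ) + (l : ℝ) - (i : ℝ)))) = P l := by
          apply Finset.prod_congr rfl
          intro i _; rw [hexp i]
        rw [hx, hPl]
        have hsgn : (q - 1) ^ j = (-1 : ℝ) ^ j * (1 - q) ^ j := by
          rw [show q - 1 = (-1) * (1 - q) by ring, mul_pow]
        rw [hsgn]
        have hpj : ((1 - q) ^ j : ℝ) ≠ 0 := pow_ne_zero _ hq0
        field_simp
        ring
    _ = (1 + q) ^ (k + 1) / P m := key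
    _ = (1 + q) ^ (k + 1) /
          ∏ i ∈ Finset.range (k + 1), (1 + q ^ ((m : ℝ) - (i : ℝ))) := rfl
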